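/- Let R = K[x_1, ..., x_n] be a polynomial ring over a field K, and let I be a monomial ideal generated by monomials whose exponent vectors all lie in the half-space { v : L(v) ≥ c } for a linear functional L with positive real coefficients and c > 0, and suppose I contains all monomials with L(exponent vector) ≥ c except possibly finitely many on the boundary hyperplane L = c. If μ is a monomial with L(h(μ)) = c, then μ is not in the inner integral closure of I. -/
import Mathlib


/-- The integral closure of an ideal `I`: elements `x` satisfying a monic equation
`x^d + a 1 * x^(d-1) + ... + a d = 0` with `a j ∈ I^j` for `1 ≤ j ≤ d`. -/
def Ideal.intClosure {R : Type*} [CommRing R] (I : Ideal R) : Set R :=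
  {x | ∃ (d : ℕ) (a : ℕ → R), 0 < d ∧ (∀ j, 1 ≤ j → j ≤ d → a j ∈ I ^ j) ∧
    x ^ d + ∑ j ∈ Finset.Icc 1 d, a j * x ^ (d - j) = 0}

namespace Stmt14Aux

variable {K : Type*} [Field K] {n : ℕ}

/-- weight functional -/
def L (m : Fin n → ℝ) (e : Fin n →₀ ℕ) : ℝ := ∑ i, m i * (e i : ℝ)

lemma L_add (m : Fin n → ℝ) (e f : Fin n →₀ ℕ) : L m (e + f) = L m e + L m f := by
  simp only [L, Finsupp.add_apply, Nat.cast_add, mul_add, Finset.sum_add_distrib]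

lemma L_nonneg {m : Fin n → ℝ} (hm : ∀ i, 0 ≤ m i) (e : Fin n →₀ ℕ) : 0 ≤ L m e :=
  Finset.sum_nonneg fun i _ => mul_nonneg (hm i) (Nat.cast_nonneg _)

lemma L_smul (m : Fin n → ℝ) (k : ℕ) (e : Fin n →₀ ℕ) : L m (k • e) = k * L m e := by
  rw [L, L, Finset.mul_sum]
  exact Finset.sum_congr rfl fun i _ => by simp [Finsupp.smul_apply]; ring

open MvPolynomial in
/-- ideal of polynomials all of whose exponents have weight ≥ t -/
def J (m : Fin n → ℝ) (hm : ∀ i, 0 ≤ m i) (t : ℝ) : Ideal (MvPolynomial (Fin n) K) where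
  carrier := {f | ∀ e ∈ f.support, t ≤ L m e}
  zero_mem' := by simp
  add_mem' := by
    intro f g hf hg e he
    rcases Finset.mem_union.mp (MvPolynomial.support_add he) with h | h
    · exact hf e h
    · exact hg e h
  smul_mem' := by
    intro p f hf e he
    have := MvPolynomial.support_mul p f he
    rcases Finset.mem_add.mp this with ⟨e1, h1, e2, h2, rfl⟩
    rw [L_add]
    have := hf e2 h2
    have := L_nonneg hm e1
    linarith

lemma J_antitone {m : Fin n → ℝ} (hm : ∀ i, 0 ≤ m i) {s t : ℝ} (hst : s ≤ t) :
    (J m hm t : Ideal (MvPolynomial (Fin n) K)) ≤ J m hm s :=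
  fun _ hf e he => le_trans hst (hf e he)

lemma J_mul {m : Fin n → ℝ} (hm : ∀ i, 0 ≤ m i) {s t : ℝ}
    {f g : MvPolynomial (Fin n) K} (hf : f ∈ J m hm s) (hg : g ∈ J m hm t) :
    f * g ∈ J m hm (s + t) := by
  intro e he
  rcases Finset.mem_add.mp (MvPolynomial.support_mul f g he) with ⟨e1, h1, e2, h2, rfl⟩
  rw [L_add]
  exact add_le_add (hf e1 h1) (hg e2 h2)

lemma J_pow {m : Fin n → ℝ} (hm : ∀ i, 0 ≤ m i) {s : ℝ}
    {I : Ideal (MvPolynomial (Fin n) K)} (hI : I ≤ J m hm s) (k : ℕ) :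
    I ^ k ≤ J m hm (k * s) := by
  induction k with
  | zero => intro f _ e _; simpa using L_nonneg hm e
  | succ k ih =>
    rw [pow_succ]
    refine (Ideal.mul_le.mpr fun f hf g hg => ?_)
    have := J_mul hm (ih hf) (hI hg)
    convert this using 2
    push_cast; ring

open MvPolynomial in
lemma monomial_mem_J {m : Fin n → ℝ} (hm : ∀ i, 0 ≤ m i) {t : ℝ} {e : Fin n →₀ ℕ}
    (h : t ≤ L m e) : (monomial e (1 : K)) ∈ J m hm t := by
  classical
  intro e' he'
  rw [MvPolynomial.support_monomial, if_neg (one_ne_zero)] at he'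
  rw [Finset.mem_singleton] at he'
  subst he'; exact h

end Stmt14Aux

open MvPolynomial in
/-- Let `I` be a monomial ideal generated by monomials with exponent vectors in the
half-space `{v : L(v) ≥ c}` for a positive linear functional `L` and `c > 0`, containing
all monomials with `L ≥ c` except possibly finitely many on the boundary `L = c`.
Then a monomial `μ` with `L(h(μ)) = c` is not in the inner integral closure of `I`. -/
theorem stmt14 {K : Type*} [Field K] {n : ℕ} (m : Fin n → ℝ) (hm : ∀ i, 0 < m i)
    (c : ℝ) (hc : 0 < c) (I : Ideal (MvPolynomial (Fin n) K))
    (G : Set (Fin n →₀ ℕ)) (hG : ∀ e ∈ G, c ≤ ∑ i, m i * (e i : ℝ))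
    (hIG : I = Ideal.span ((fun e => (monomial e (1 : K) : MvPolynomial (Fin n) K)) '' G))
    (E : Finset (Fin n →₀ ℕ)) (hE : ∀ e ∈ E, ∑ i, m i * (e i : ℝ) = c)
    (hfull : ∀ e : Fin n →₀ ℕ, c ≤ ∑ i, m i * (e i : ℝ) → e ∉ E →
      (monomial e (1 : K) : MvPolynomial (Fin n) K) ∈ I)
    (d : Fin n →₀ ℕ) (hd : ∑ i, m i * (d i : ℝ) = c) :
    ¬ ∃ N : ℕ, 1 ≤ N ∧ (monomial d (1 : K) : MvPolynomial (Fin n) K) ^ N ∈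
      (I ^ (N + 1)).intClosure := by
  classical
  rintro ⟨N, hN, D, a, hD, ha, heq⟩
  have hm' : ∀ i, 0 ≤ m i := fun i => (hm i).le
  -- I ≤ J c
  have hIc : I ≤ Stmt14Aux.J m hm' c := by
    rw [hIG, Ideal.span_le]
    rintro _ ⟨e, heG, rfl⟩
    exact Stmt14Aux.monomial_mem_J hm' (hG e heG)
  -- powers of the monomial
  have hmono : ∀ k : ℕ, (monomial d (1 : K) : MvPolynomial (Fin n) K) ^ k
      = monomial (k • d) (1 : K) := by
    intro k
    rw [MvPolynomial.monomial_pow, one_pow]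
  have hLd : Stmt14Aux.L m d = c := hd
  -- each term of the sum is in J ((N*D+1)*c)
  have hterm : ∀ j ∈ Finset.Icc 1 D,
      a j * ((monomial d (1 : K) : MvPolynomial (Fin n) K) ^ N) ^ (D - j)
        ∈ Stmt14Aux.J m hm' ((N * D + 1 : ℕ) * c) := by
    intro j hj
    rw [Finset.mem_Icc] at hj
    have haj : a j ∈ Stmt14Aux.J m hm' (((N + 1) * j : ℕ) * c) := by
      have h1 : (I ^ (N + 1)) ^ j = I ^ ((N + 1) * j) := (pow_mul I (N + 1) j).symm
      have := ha j hj.1 hj.2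
      rw [h1] at this
      exact Stmt14Aux.J_pow hm' hIc ((N + 1) * j) this
    have hmu : ((monomial d (1 : K) : MvPolynomial (Fin n) K) ^ N) ^ (D - j)
        ∈ Stmt14Aux.J m hm' ((N * (D - j) : ℕ) * c) := by
      rw [← pow_mul, hmono]
      apply Stmt14Aux.monomial_mem_J hm'
      rw [Stmt14Aux.L_smul, hLd]
    have := Stmt14Aux.J_mul hm' haj hmu
    refine Stmt14Aux.J_antitone hm' ?_ this
    have hnat : (N * D + 1 : ℕ) ≤ (N + 1) * j + N * (D - j) := by
      have := hj.1; have := hj.2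
      cases Nat.le.dest hj.2 with
      | intro k hk =>
        subst hk
        have h2 : (j + k) - j = k := by omega
        rw [h2]
        nlinarith [hj.1]
    calc ((N * D + 1 : ℕ) : ℝ) * c ≤ (((N + 1) * j + N * (D - j) : ℕ) : ℝ) * c := by
          apply mul_le_mul_of_nonneg_right _ hc.le
          exact_mod_cast hnat
      _ = ((N + 1) * j : ℕ) * c + ((N * (D - j) : ℕ)) * c := by push_cast; ring
  -- the whole sum is in J ((N*D+1)*c)
  have hsum : (∑ j ∈ Finset.Icc 1 D,
      a j * ((monomial d (1 : K) : MvPolynomial (Fin n) K) ^ N) ^ (D - j))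
        ∈ Stmt14Aux.J m hm' ((N * D + 1 : ℕ) * c) :=
    Ideal.sum_mem _ hterm
  -- hence the monomial itself is in it
  have hmem : ((monomial d (1 : K) : MvPolynomial (Fin n) K) ^ N) ^ D
      ∈ Stmt14Aux.J m hm' ((N * D + 1 : ℕ) * c) := by
    have : ((monomial d (1 : K) : MvPolynomial (Fin n) K) ^ N) ^ D
        = -(∑ j ∈ Finset.Icc 1 D,
            a j * ((monomial d (1 : K) : MvPolynomial (Fin n) K) ^ N) ^ (D - j)) := by
      have := heq
      linear_combination this
    rw [this]
    exact neg_mem hsum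
  -- derive contradiction from the coefficient at (N*D) • d
  rw [← pow_mul, hmono] at hmem
  have hsupp : (N * D) • d ∈ (monomial ((N * D) • d) (1 : K) :
      MvPolynomial (Fin n) K).support := by
    rw [MvPolynomial.support_monomial]
    simp
  have := hmem _ hsupp
  rw [Stmt14Aux.L_smul, hLd] at this
  have hcast : ((N * D + 1 : ℕ) : ℝ) = (N * D : ℕ) + 1 := by push_cast; ring
  rw [hcast] at this
  nlinarith [hc]
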